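/- Let F ⊆ H be a violating edge set and let E' ⊆ E(𝒯) ∖ M^{-1}(F). Suppose that for every pair (A, B) ∈ Z_F there exist tree vertices a, b ∈ V(𝒯) with M1(a) ∈ A and M1(b) ∈ B such that a and b are connected in the graph (V(𝒯), E'). Then for every i ∈ [k], s_i and t_i are connected in (M(E') ∪ H) ∖ F. -/

import Mathlib

open scoped Classical

/-- The edges of `H` with exactly one endpoint in `S` (the cut `δ_H(S)`).
Edges are abstract objects of type `E` with endpoint maps `g₁ g₂ : E → V`. -/
noncomputable def cutEdges {V E : Type*} (g₁ g₂ : E → V) (H : Finset E) (S : Finset V) :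
    Finset E :=
  H.filter fun e => (g₁ e ∈ S) ≠ (g₂ e ∈ S)

/-- `u` and `v` are connected by a path using only edges of `H`. -/
def ConnectedIn {V E : Type*} (g₁ g₂ : E → V) (H : Finset E) (u v : V) : Prop :=
  Relation.ReflTransGen (fun a b => ∃ e ∈ H, (g₁ e = a ∧ g₂ e = b) ∨ (g₁ e = b ∧ g₂ e = a)) u v

/-- `u` and `v` are `p`-edge-connected in `H`: for every `D ⊆ H` with `|D| ≤ p - 1`,
`u` and `v` are connected in `H \ D`. -/
def PEdgeConnected {V E : Type*} (g₁ g₂ : E → V) (p : ℕ) (H : Finset E) (u v : V) : Prop :=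
  ∀ D : Finset E, D ⊆ H → D.card ≤ p - 1 → ConnectedIn g₁ g₂ (H \ D) u v

/-- `u` and `v` are `(p,q)`-flex-connected in `H` (with unsafe edge set `Unsafe`):
for every `U ⊆ Unsafe` with `|U| ≤ q`, `u` and `v` are `p`-edge-connected in `H \ U`. -/
def FlexConnected {V E : Type*} (g₁ g₂ : E → V) (Unsafe : Finset E) (p q : ℕ)
    (H : Finset E) (u v : V) : Prop :=
  ∀ U : Finset E, U ⊆ Unsafe → U.card ≤ q → PEdgeConnected g₁ g₂ p (H \ U) u v

/-- A vertex set `S` is violated (w.r.t. the partial solution `H`, safe edges `Safe`,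
parameters `p q` and terminal pairs `st`): exactly one of `s_i, t_i` lies in `S` for
some `i`, `|δ_H(S)| = p + q`, and `|δ_H(S) ∩ Safe| ≤ p - 1`. -/
def Violated {V E : Type*} (g₁ g₂ : E → V) (Safe : Finset E) (p q : ℕ) {k : ℕ}
    (st : Fin k → V × V) (H : Finset E) (S : Finset V) : Prop :=
  (∃ i : Fin k, ((st i).1 ∈ S) ≠ ((st i).2 ∈ S)) ∧
    (cutEdges g₁ g₂ H S).card = p + q ∧
    (cutEdges g₁ g₂ H S ∩ Safe).card ≤ p - 1

/-- `(t₁, t₂ : TE → TV)` describes a (multi)graph which is a tree: it is connected and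
every edge is a bridge. -/
def IsTree' {TV TE : Type*} [Fintype TE] (t₁ t₂ : TE → TV) : Prop :=
  (∀ a b : TV, ConnectedIn t₁ t₂ Finset.univ a b) ∧
    ∀ f : TE, ¬ ConnectedIn t₁ t₂ (Finset.univ \ {f}) (t₁ f) (t₂ f)

/-- `V_f`: the `M1`-images of the leaves (elements of `L`) lying in the connected component
of the tree with `f` deleted that contains the endpoint `t₁ f`. -/
noncomputable def compVerts {V TV TE : Type*} [Fintype TE] (t₁ t₂ : TE → TV)
    (M1 : TV → V) (L : Finset TV) (f : TE) : Finset V :=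
  (L.filter fun a => ConnectedIn t₁ t₂ (Finset.univ \ {f}) a (t₁ f)).image M1

/-- The capacity `y(f) = Σ_{e ∈ δ_E(V_f)} x(e)` induced on a tree edge `f` by
capacities `x` on the edges of `G`. -/
noncomputable def treeCap {V E TV TE : Type*} [Fintype E] [Fintype TE]
    (g₁ g₂ : E → V) (t₁ t₂ : TE → TV) (M1 : TV → V) (L : Finset TV)
    (x : E → NNReal) (f : TE) : NNReal :=
  ∑ e ∈ cutEdges g₁ g₂ Finset.univ (compVerts t₁ t₂ M1 L f), x e

/-- `M^{-1}(F)`: tree edges `f` with `M2(f) ∩ F ≠ ∅`. -/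
noncomputable def Minv {E TE : Type*} [Fintype TE] (M2 : TE → Finset E) (F : Finset E) :
    Finset TE :=
  Finset.univ.filter fun f => (M2 f ∩ F).Nonempty

/-- `M(E') = ⋃_{f ∈ E'} M2(f)`. -/
noncomputable def Mimg {E TE : Type*} (M2 : TE → Finset E) (E' : Finset TE) : Finset E :=
  E'.biUnion M2

/-- The connected component containing `v` of the graph on `V` with edge set `H`. -/
noncomputable def Qcomp {V E : Type*} [Fintype V] (g₁ g₂ : E → V) (H : Finset E) (v : V) :
    Finset V :=
  Finset.univ.filter fun u => ConnectedIn g₁ g₂ H u v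

/-- A vertex set `Q` is shattered (w.r.t. the tree and `M^{-1}(F)`): the leaves whose
`M1`-images lie in `Q` are not all in a single connected component of the tree with the
edges of `M^{-1}(F)` deleted. -/
def IsShattered {V E TV TE : Type*} [Fintype TE] (t₁ t₂ : TE → TV) (M1 : TV → V)
    (L : Finset TV) (M2 : TE → Finset E) (F : Finset E) (Q : Finset V) : Prop :=
  ∃ a ∈ L, ∃ b ∈ L, M1 a ∈ Q ∧ M1 b ∈ Q ∧
    ¬ ConnectedIn t₁ t₂ (Finset.univ \ Minv M2 F) a b

/-- `Z_F`: the pairs `(A ∪ Q_{s_i}, B ∪ Q_{t_i})` over `i ∈ [k]` and pairs `(A, B)`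
partitioning the union of the shattered components of `(V, H \ F)`, each shattered
component lying entirely in `A` or entirely in `B`, such that the two sets of the pair
are disjoint. -/
def ZF {V E TV TE : Type*} [Fintype V] [Fintype TE] (g₁ g₂ : E → V) (t₁ t₂ : TE → TV)
    (M1 : TV → V) (L : Finset TV) (M2 : TE → Finset E) {k : ℕ} (st : Fin k → V × V)
    (H F : Finset E) : Set (Finset V × Finset V) :=
  { P | ∃ i : Fin k, ∃ A B : Finset V,
      Disjoint A B ∧
      A ∪ B = Finset.univ.filter
        (fun v => IsShattered t₁ t₂ M1 L M2 F (Qcomp g₁ g₂ (H \ F) v)) ∧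
      (∀ v : V, IsShattered t₁ t₂ M1 L M2 F (Qcomp g₁ g₂ (H \ F) v) →
        Qcomp g₁ g₂ (H \ F) v ⊆ A ∨ Qcomp g₁ g₂ (H \ F) v ⊆ B) ∧
      P.1 = A ∪ Qcomp g₁ g₂ (H \ F) (st i).1 ∧
      P.2 = B ∪ Qcomp g₁ g₂ (H \ F) (st i).2 ∧
      Disjoint P.1 P.2 }

/-- The number of shattered connected components of `(V, H \ F)`. -/
noncomputable def shatteredCount {V E TV TE : Type*} [Fintype V] [Fintype TE]
    (g₁ g₂ : E → V) (t₁ t₂ : TE → TV) (M1 : TV → V) (L : Finset TV)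
    (M2 : TE → Finset E) (H F : Finset E) : ℕ :=
  ((Finset.univ.image fun v => Qcomp g₁ g₂ (H \ F) v).filter
    fun Q => IsShattered t₁ t₂ M1 L M2 F Q).card


private lemma connectedIn_symm {V E : Type*} {g₁ g₂ : E → V} {H : Finset E} {u v : V}
    (h : ConnectedIn g₁ g₂ H u v) : ConnectedIn g₁ g₂ H v u := by
  refine (@Relation.ReflTransGen.stdSymm _ _ ⟨?_⟩).symm _ _ h
  rintro a b ⟨e, he, h⟩
  exact ⟨e, he, h.symm⟩

private lemma connectedIn_mono {V E : Type*} {g₁ g₂ : E → V} {H H' : Finset E} {u v : V}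
    (hs : H ⊆ H') (h : ConnectedIn g₁ g₂ H u v) : ConnectedIn g₁ g₂ H' u v := by
  refine Relation.ReflTransGen.mono ?_ _ _ h
  rintro a b ⟨e, he, h⟩
  exact ⟨e, hs he, h⟩

private lemma mem_Qcomp {V E : Type*} [Fintype V] {g₁ g₂ : E → V} {K : Finset E} {u v : V} :
    u ∈ Qcomp g₁ g₂ K v ↔ ConnectedIn g₁ g₂ K u v := by
  simp [Qcomp]

/-- If `E' ⊆ E(𝒯) \ M⁻¹(F)` connects, for each pair `(A, B) ∈ Z_F`, some tree vertex
with `M1`-image in `A` to some tree vertex with `M1`-image in `B`, then each terminal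
pair `(s_i, t_i)` is connected in `(M(E') ∪ H) \ F`. -/
theorem shattered_connectivity_suffices {V E TV TE : Type*}
    [Fintype V] [Fintype E] [Fintype TE]
    (g₁ g₂ : E → V) (Safe : Finset E)
    (t₁ t₂ : TE → TV) (htree : IsTree' t₁ t₂)
    (M1 : TV → V) (L : Finset TV) (hM1 : Set.BijOn M1 (↑L) Set.univ)
    (M2 : TE → Finset E)
    (hM2 : ∀ f : TE, ConnectedIn g₁ g₂ (M2 f) (M1 (t₁ f)) (M1 (t₂ f)))
    (p q : ℕ) (k : ℕ) (st : Fin k → V × V) (H : Finset E)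
    (F : Finset E) (hFH : F ⊆ H)
    (hFviol : ∃ S : Finset V, Violated g₁ g₂ Safe p q st H S ∧ F = cutEdges g₁ g₂ H S)
    (E' : Finset TE) (hE' : Disjoint E' (Minv M2 F))
    (hcon : ∀ P ∈ ZF g₁ g₂ t₁ t₂ M1 L M2 st H F, ∃ a b : TV,
      M1 a ∈ P.1 ∧ M1 b ∈ P.2 ∧ ConnectedIn t₁ t₂ E' a b) :
    ∀ i : Fin k, ConnectedIn g₁ g₂ ((Mimg M2 E' ∪ H) \ F) (st i).1 (st i).2 := by
  intro i
  by_contra hne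
  set G' : Finset E := (Mimg M2 E' ∪ H) \ F with hG'
  have hHF : H \ F ⊆ G' := by
    intro e he
    rw [Finset.mem_sdiff] at he ⊢
    exact ⟨Finset.mem_union_right _ he.1, he.2⟩
  -- tree connectivity transfers to G'
  have htrans : ∀ a b : TV, ConnectedIn t₁ t₂ E' a b →
      ConnectedIn g₁ g₂ G' (M1 a) (M1 b) := by
    intro a b h
    induction h with
    | refl => exact Relation.ReflTransGen.refl
    | tail hab step ih =>
      rename_i b' c
      obtain ⟨f, hf, hor⟩ := step
      have hsub : M2 f ⊆ G' := by
        intro e he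
        rw [Finset.mem_sdiff]
        constructor
        · exact Finset.mem_union_left _ (Finset.mem_biUnion.2 ⟨f, hf, he⟩)
        · intro heF
          have : f ∈ Minv M2 F := by
            simp only [Minv, Finset.mem_filter, Finset.mem_univ, true_and]
            exact ⟨e, Finset.mem_inter.2 ⟨he, heF⟩⟩
          exact (Finset.disjoint_left.1 hE' hf) this
      have hconf : ConnectedIn g₁ g₂ G' (M1 (t₁ f)) (M1 (t₂ f)) :=
        connectedIn_mono hsub (hM2 f)
      rcases hor with ⟨h1, h2⟩ | ⟨h1, h2⟩
      · exact ih.trans (h1 ▸ h2 ▸ hconf)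
      · exact ih.trans (h2 ▸ h1 ▸ connectedIn_symm hconf)
  -- build the pair (A, B)
  set Sh : V → Prop := fun v => IsShattered t₁ t₂ M1 L M2 F (Qcomp g₁ g₂ (H \ F) v) with hSh
  set A : Finset V := (Finset.univ.filter Sh).filter
    (fun v => ConnectedIn g₁ g₂ G' v (st i).1) with hA
  set B : Finset V := (Finset.univ.filter Sh).filter
    (fun v => ¬ ConnectedIn g₁ g₂ G' v (st i).1) with hB
  have hQeq : ∀ u v : V, ConnectedIn g₁ g₂ (H \ F) u v →
      Qcomp g₁ g₂ (H \ F) u = Qcomp g₁ g₂ (H \ F) v := by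
    intro u v huv
    ext w
    simp only [mem_Qcomp]
    exact ⟨fun hw => hw.trans huv, fun hw => hw.trans (connectedIn_symm huv)⟩
  have hP : ((A ∪ Qcomp g₁ g₂ (H \ F) (st i).1, B ∪ Qcomp g₁ g₂ (H \ F) (st i).2) :
      Finset V × Finset V) ∈ ZF g₁ g₂ t₁ t₂ M1 L M2 st H F := by
    refine ⟨i, A, B, ?_, ?_, ?_, rfl, rfl, ?_⟩
    · rw [Finset.disjoint_left]
      intro v hvA hvB
      rw [hA, Finset.mem_filter] at hvA
      rw [hB, Finset.mem_filter] at hvB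
      exact hvB.2 hvA.2
    · rw [hA, hB, Finset.filter_union_filter_not_eq]
    · intro v hv
      by_cases hc : ConnectedIn g₁ g₂ G' v (st i).1
      · left
        intro u hu
        rw [mem_Qcomp] at hu
        rw [hA, Finset.mem_filter, Finset.mem_filter]
        refine ⟨⟨Finset.mem_univ u, ?_⟩, (connectedIn_mono hHF hu).trans hc⟩
        show IsShattered t₁ t₂ M1 L M2 F (Qcomp g₁ g₂ (H \ F) u)
        rw [hQeq u v hu]; exact hv
      · right
        intro u hu
        rw [mem_Qcomp] at hu
        rw [hB, Finset.mem_filter, Finset.mem_filter]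
        refine ⟨⟨Finset.mem_univ u, ?_⟩, fun hcu => hc
          ((connectedIn_symm (connectedIn_mono hHF hu)).trans hcu)⟩
        show IsShattered t₁ t₂ M1 L M2 F (Qcomp g₁ g₂ (H \ F) u)
        rw [hQeq u v hu]; exact hv
    · rw [Finset.disjoint_left]
      intro v hv1 hv2
      rw [Finset.mem_union] at hv1 hv2
      have hv1' : ConnectedIn g₁ g₂ G' v (st i).1 := by
        rcases hv1 with h | h
        · rw [hA, Finset.mem_filter] at h; exact h.2
        · rw [mem_Qcomp] at h; exact connectedIn_mono hHF h
      rcases hv2 with h | h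
      · rw [hB, Finset.mem_filter] at h; exact h.2 hv1'
      · rw [mem_Qcomp] at h
        exact hne ((connectedIn_symm hv1').trans (connectedIn_mono hHF h))
  obtain ⟨a, b, ha, hb, hab⟩ := hcon _ hP
  have hMab : ConnectedIn g₁ g₂ G' (M1 a) (M1 b) := htrans a b hab
  have hsa : ConnectedIn g₁ g₂ G' (M1 a) (st i).1 := by
    rw [Finset.mem_union] at ha
    rcases ha with h | h
    · rw [hA, Finset.mem_filter] at h; exact h.2
    · rw [mem_Qcomp] at h; exact connectedIn_mono hHF h
  rw [Finset.mem_union] at hb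
  rcases hb with h | h
  · rw [hB, Finset.mem_filter] at h
    exact h.2 ((connectedIn_symm hMab).trans hsa)
  · rw [mem_Qcomp] at h
    exact hne (((connectedIn_symm hsa).trans hMab).trans (connectedIn_mono hHF h))
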